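/- Let o be a noetherian commutative ring, F a nonarchimedean local field, B the upper triangular subgroup of GL(2,F), and let V be a smooth representation of B over o. Let V_0 be an o[B_0 Z]-submodule of V generating V as o[B]-module, and suppose the kernel R_V(V_0) of the associated presentation ind_{B_0 Z}^B(V_0) -> V is finitely generated as o[B]-module. Then Delta_V(V_0) := <B^+ V_0> ∩ <(B - B^+) V_0> is finitely generated as an o[B_0 Z]-module. -/

import Mathlib

noncomputable section
attribute [local instance] Classical.propDecidable
open Pointwise


/-! ### Generalities on smooth representations over a commutative ring `o` -/

section RepPrelim

variable (o : Type) [CommRing o]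

/-- The `o`-submodule of `V` generated by `{s • w | s ∈ S, w ∈ W}`; written `<S W>` in the paper. -/
def gspan {H : Type} (V : Type) [AddCommGroup V] [Module o V] [SMul H V]
    (S : Set H) (W : Set V) : Submodule o V :=
  Submodule.span o {v : V | ∃ s ∈ S, ∃ w ∈ W, v = s • w}

/-- A submodule `N` is stable under the set `S` of group elements. -/
def IsStableSub {H : Type} (V : Type) [AddCommGroup V] [Module o V] [SMul H V]
    (S : Set H) (N : Submodule o V) : Prop :=
  ∀ s ∈ S, ∀ v ∈ N, s • v ∈ N

/-- `N` is a finitely generated module over `o[S]`. -/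
def IsFGOver {H : Type} (V : Type) [AddCommGroup V] [Module o V] [SMul H V]
    (S : Set H) (N : Submodule o V) : Prop :=
  ∃ X : Finset V, (X : Set V) ⊆ (N : Set V) ∧ N = gspan o V S (X : Set V)

/-- The submodule of `S`-invariants. -/
def invariantsSub (H : Type) [Group H] (V : Type) [AddCommGroup V] [Module o V]
    [DistribMulAction H V] [SMulCommClass H o V] (S : Set H) : Submodule o V where
  carrier := {v | ∀ s ∈ S, s • v = v}
  add_mem' := by intro a b ha hb s hs; rw [smul_add, ha s hs, hb s hs]
  zero_mem' := by intro s hs; exact smul_zero s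
  smul_mem' := by intro c v hv s hs; rw [smul_comm, hv s hs]

/-- The action of a fixed group element as an `o`-linear map. -/
def actLin (H : Type) [Group H] (V : Type) [AddCommGroup V] [Module o V]
    [DistribMulAction H V] [SMulCommClass H o V] (g : H) : V →ₗ[o] V where
  toFun v := g • v
  map_add' := smul_add g
  map_smul' c v := by simpa using smul_comm g c v

/-- `V` has finite length as an `o[H]`-module: it admits a composition series of
`H`-stable `o`-submodules. -/
def IsFiniteLengthRep (H : Type) [Group H] (V : Type) [AddCommGroup V] [Module o V]
    [DistribMulAction H V] : Prop :=
  ∃ (n : ℕ) (c : Fin (n + 1) → Submodule o V),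
    c 0 = ⊥ ∧ c (Fin.last n) = ⊤ ∧
    (∀ i, IsStableSub o V (Set.univ : Set H) (c i)) ∧
    (∀ i : Fin n, c i.castSucc < c i.succ) ∧
    (∀ i : Fin n, ∀ N : Submodule o V, IsStableSub o V (Set.univ : Set H) N →
      c i.castSucc ≤ N → N ≤ c i.succ → N = c i.castSucc ∨ N = c i.succ)

/-- Smoothness: each vector has open stabilizer. -/
def IsSmoothRep (H : Type) [Group H] [TopologicalSpace H] (V : Type) [AddCommGroup V]
    [Module o V] [DistribMulAction H V] : Prop :=
  ∀ v : V, IsOpen {h : H | h • v = v}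

/-- Admissibility: invariants under any compact open subgroup form a f.g. `o`-module. -/
def IsAdmissibleRep (H : Type) [Group H] [TopologicalSpace H] (V : Type) [AddCommGroup V]
    [Module o V] [DistribMulAction H V] [SMulCommClass H o V] : Prop :=
  ∀ H' : Subgroup H, IsCompact (H' : Set H) → IsOpen (H' : Set H) →
    (invariantsSub o H V (H' : Set H)).FG

end RepPrelim

/-! ### Compact induction `ind_{S}^{H}(V₀)` and finite presentations -/

section Induction

variable (o : Type) [CommRing o]
variable {H : Type} [Group H] {V : Type} [AddCommGroup V] [Module o V]
variable [DistribMulAction H V] [SMulCommClass H o V]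

/-- The compact induction `ind_S^H (V₀)`, realized as the `o`-module of functions
`f : H → V` with values in `V₀`, satisfying `f (s * h) = s • f h` for `s ∈ S`, and
supported on finitely many right cosets `S * x`. -/
def Ind (S : Subgroup H) (V0 : Submodule o V) : Submodule o (H → V) where
  carrier := {f | (∀ h, f h ∈ V0) ∧ (∀ s ∈ S, ∀ h, f (s * h) = s • f h) ∧
      ∃ X : Finset H, ∀ h, f h ≠ 0 → ∃ s ∈ S, ∃ x ∈ X, h = s * x}
  add_mem' := by
    rintro f g ⟨hf1, hf2, Xf, hXf⟩ ⟨hg1, hg2, Xg, hXg⟩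
    refine ⟨fun h => V0.add_mem (hf1 h) (hg1 h),
      fun s hs h => by simp only [Pi.add_apply, hf2 s hs h, hg2 s hs h, smul_add],
      Xf ∪ Xg, fun h hh => ?_⟩
    by_cases hf : f h = 0
    · have hg : g h ≠ 0 := fun h0 => hh (by simp [Pi.add_apply, hf, h0])
      obtain ⟨s, hs, x, hx, hxx⟩ := hXg h hg
      exact ⟨s, hs, x, Finset.mem_union_right _ hx, hxx⟩
    · obtain ⟨s, hs, x, hx, hxx⟩ := hXf h hf
      exact ⟨s, hs, x, Finset.mem_union_left _ hx, hxx⟩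
  zero_mem' :=
    ⟨fun _ => V0.zero_mem, fun s _ _ => (smul_zero s).symm, ∅, fun h hh => absurd rfl hh⟩
  smul_mem' := by
    rintro c f ⟨hf1, hf2, Xf, hXf⟩
    refine ⟨fun h => V0.smul_mem c (hf1 h),
      fun s hs h => by
        simp only [Pi.smul_apply, hf2 s hs h]
        exact (smul_comm s c (f h)).symm,
      Xf, fun h hh => hXf h (fun h0 => hh (by simp [Pi.smul_apply, h0]))⟩

variable {S : Subgroup H} {V0 : Submodule o V}

/-- Right translation, giving the `H`-action on the compact induction. -/
def indTrans (g : H) (f : H → V) : H → V := fun h => f (h * g)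

lemma indTrans_mem (g : H) {f : H → V} (hf : f ∈ Ind o S V0) : indTrans g f ∈ Ind o S V0 := by
  obtain ⟨h1, h2, X, hX⟩ := hf
  refine ⟨fun h => h1 _, fun s hs h => by
      simpa [indTrans, mul_assoc] using h2 s hs (h * g),
    X.image (· * g⁻¹), fun h hh => ?_⟩
  obtain ⟨s, hs, x, hx, hxx⟩ := hX (h * g) hh
  refine ⟨s, hs, x * g⁻¹, Finset.mem_image_of_mem _ hx, ?_⟩
  rw [← mul_assoc, ← hxx, mul_assoc, mul_inv_cancel, mul_one]

instance : SMul H (Ind o S V0) :=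
  ⟨fun g f => ⟨indTrans g (f : H → V), indTrans_mem o g f.2⟩⟩

lemma ind_smul_apply (g : H) (f : Ind o S V0) (h : H) :
    ((g • f : Ind o S V0) : H → V) h = (f : H → V) (h * g) := rfl

instance : MulAction H (Ind o S V0) where
  one_smul f := Subtype.ext (funext fun h => by simp [ind_smul_apply])
  mul_smul g1 g2 f := Subtype.ext (funext fun h => by simp [ind_smul_apply, mul_assoc])

instance : DistribMulAction H (Ind o S V0) where
  smul_add g f1 f2 := Subtype.ext (funext fun h => rfl)
  smul_zero g := Subtype.ext (funext fun h => rfl)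

instance : SMulCommClass H o (Ind o S V0) :=
  ⟨fun g c f => Subtype.ext (funext fun h => rfl)⟩

/-- The function `[1, v]` supported on `S`, with value `v` at `1`. -/
def unitFn (S : Subgroup H) (v : V) : H → V := fun h => if h ∈ S then h • v else 0

lemma unitFn_mem (hst : IsStableSub o V (S : Set H) V0) {v : V} (hv : v ∈ V0) :
    unitFn S v ∈ Ind o S V0 := by
  refine ⟨fun h => ?_, fun s hs h => ?_, {1}, fun h hh => ?_⟩
  · by_cases h1 : h ∈ S
    · simpa [unitFn, h1] using hst h h1 v hv
    · simp [unitFn, h1, V0.zero_mem]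
  · by_cases h1 : h ∈ S
    · have hsh : s * h ∈ S := S.mul_mem hs h1
      simp [unitFn, h1, hsh, mul_smul]
    · have hsh : s * h ∉ S := fun hc => h1 (by simpa using S.mul_mem (S.inv_mem hs) hc)
      simp [unitFn, h1, hsh]
  · by_cases h1 : h ∈ S
    · exact ⟨h, h1, 1, Finset.mem_singleton_self 1, (mul_one h).symm⟩
    · simp [unitFn, h1] at hh

/-- The element `[1, v]` of the compact induction. -/
def unitElt (hst : IsStableSub o V (S : Set H) V0) {v : V} (hv : v ∈ V0) : Ind o S V0 :=
  ⟨unitFn S v, unitFn_mem o hst hv⟩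

/-- `P` is the natural presentation map `ind_S^H (V₀) → V`: it is `H`-equivariant and sends
`[1, v]` to `v`. -/
def IsPresMap (hst : IsStableSub o V (S : Set H) V0) (P : Ind o S V0 →ₗ[o] V) : Prop :=
  (∀ (g : H) (f : Ind o S V0), P (g • f) = g • P f) ∧
  (∀ v (hv : v ∈ V0), P (unitElt o hst hv) = v)

end Induction

/-- `V₀ ⊆ V` yields a finite presentation `ind_S^H (V₀) → V`: `V₀` is an `S`-stable
`o`-submodule, finitely generated over `o[S]`, generating `V` over `o[H]`, and the kernel of
the natural presentation map is finitely generated over `o[H]`. -/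
def FinitelyPresentedVia (o : Type) [CommRing o] {H : Type} [Group H] {V : Type}
    [AddCommGroup V] [Module o V] [DistribMulAction H V] [SMulCommClass H o V]
    (S : Subgroup H) (V0 : Submodule o V) : Prop :=
  ∃ hst : IsStableSub o V (S : Set H) V0,
    IsFGOver o V (S : Set H) V0 ∧ gspan o V (Set.univ : Set H) (V0 : Set V) = ⊤ ∧
    ∃ P : Ind o S V0 →ₗ[o] V, IsPresMap o hst P ∧
      IsFGOver o (Ind o S V0) (Set.univ : Set H) (LinearMap.ker P)

/-- `V` is of finite presentation relative to the open subgroup `S`. -/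
def HasFinitePres (o : Type) [CommRing o] {H : Type} [Group H] (V : Type)
    [AddCommGroup V] [Module o V] [DistribMulAction H V] [SMulCommClass H o V]
    (S : Subgroup H) : Prop :=
  ∃ V0 : Submodule o V, FinitelyPresentedVia o S V0


/-! ### The group `GL(2,F)` over a nonarchimedean local field `F` -/

open Matrix

/-- Bundle of data making the field `F` a nonarchimedean local field: the valuation
ring `O`, a uniformizer `ϖ` generating the maximal ideal, finiteness of the residue
field, compatibility of the topology with the valuation, and local compactness
(equivalently, completeness). -/
structure NALF (F : Type) [Field F] [TopologicalSpace F] [IsTopologicalRing F] where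
  O : Subring F
  isValRing : ∀ x : F, x ≠ 0 → x ∈ O ∨ x⁻¹ ∈ O
  ϖ : F
  ϖ_mem : ϖ ∈ O
  ϖ_ne_zero : ϖ ≠ 0
  ϖ_not_unit : ϖ⁻¹ ∉ O
  ϖ_gen : ∀ x ∈ O, x⁻¹ ∉ O → x / ϖ ∈ O
  residue_finite : Finite (↥O ⧸ Ideal.span {(⟨ϖ, ϖ_mem⟩ : ↥O)})
  nhds_zero : ∀ s : Set F, s ∈ nhds (0 : F) ↔ ∃ n : ℕ, {x : F | ∃ y ∈ O, x = ϖ ^ n * y} ⊆ s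
  locallyCompact : LocallyCompactSpace F

variable (F : Type) [Field F]

lemma GL2.inv_entry_ne (g : GL (Fin 2) F)
    (hg : (g : Matrix (Fin 2) (Fin 2) F) 1 0 = 0) :
    ((g⁻¹ : GL (Fin 2) F) : Matrix (Fin 2) (Fin 2) F) 1 0 = 0 := by
  have hAC : (g : Matrix (Fin 2) (Fin 2) F) * ((g⁻¹ : GL (Fin 2) F) : Matrix (Fin 2) (Fin 2) F)
      = 1 := by
    rw [← Units.val_mul, mul_inv_cancel, Units.val_one]
  have h1 : ((g : Matrix (Fin 2) (Fin 2) F) *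
      ((g⁻¹ : GL (Fin 2) F) : Matrix (Fin 2) (Fin 2) F)) 1 0 = 0 := by
    rw [hAC]; exact Matrix.one_apply_ne (by decide)
  have h2 : ((g : Matrix (Fin 2) (Fin 2) F) *
      ((g⁻¹ : GL (Fin 2) F) : Matrix (Fin 2) (Fin 2) F)) 1 1 = 1 := by
    rw [hAC]; exact Matrix.one_apply_eq 1
  rw [Matrix.mul_apply, Fin.sum_univ_two, hg, zero_mul, zero_add] at h1
  rw [Matrix.mul_apply, Fin.sum_univ_two, hg, zero_mul, zero_add] at h2
  rcases mul_eq_zero.mp h1 with h | h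
  · exact absurd h2 (by rw [h, zero_mul]; exact zero_ne_one)
  · exact h

/-- The upper triangular (Borel) subgroup `B ⊆ GL(2,F)`. -/
def Bgr : Subgroup (GL (Fin 2) F) where
  carrier := {g | (g : Matrix (Fin 2) (Fin 2) F) 1 0 = 0}
  one_mem' := by
    show ((1 : GL (Fin 2) F) : Matrix (Fin 2) (Fin 2) F) 1 0 = 0
    rw [Units.val_one]; exact Matrix.one_apply_ne (by decide)
  mul_mem' := by
    intro a b ha hb
    show ((a * b : GL (Fin 2) F) : Matrix (Fin 2) (Fin 2) F) 1 0 = 0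
    rw [Units.val_mul, Matrix.mul_apply, Fin.sum_univ_two]
    simp only [Set.mem_setOf_eq] at ha hb
    rw [ha, hb, zero_mul, mul_zero, add_zero]
  inv_mem' := by
    intro a ha
    exact GL2.inv_entry_ne F a ha

/-- The maximal compact subgroup `K = GL(2, O_F)` of `GL(2,F)`. -/
def Kgr (O : Subring F) : Subgroup (GL (Fin 2) F) where
  carrier := {g | (∀ i j, (g : Matrix (Fin 2) (Fin 2) F) i j ∈ O) ∧
      (∀ i j, ((g⁻¹ : GL (Fin 2) F) : Matrix (Fin 2) (Fin 2) F) i j ∈ O)}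
  one_mem' := by
    constructor <;>
    · intro i j
      simp only [inv_one, Units.val_one]
      by_cases h : i = j
      · rw [h, Matrix.one_apply_eq]; exact O.one_mem
      · rw [Matrix.one_apply_ne h]; exact O.zero_mem
  mul_mem' := by
    rintro a b ⟨ha1, ha2⟩ ⟨hb1, hb2⟩
    constructor
    · intro i j
      rw [Units.val_mul, Matrix.mul_apply]
      exact Subring.sum_mem O fun k _ => O.mul_mem (ha1 i k) (hb1 k j)
    · intro i j
      rw [_root_.mul_inv_rev, Units.val_mul, Matrix.mul_apply]
      exact Subring.sum_mem O fun k _ => O.mul_mem (hb2 i k) (ha2 k j)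
  inv_mem' := by
    rintro a ⟨ha1, ha2⟩
    refine ⟨ha2, ?_⟩
    rw [inv_inv]
    exact ha1

/-- For a subgroup `A` of a group `G`, the subgroup `A · Z(G)`. -/
def centMul {G : Type} [Group G] (A : Subgroup G) : Subgroup G where
  carrier := {g | ∃ a ∈ A, ∃ z ∈ Subgroup.center G, g = a * z}
  one_mem' := ⟨1, A.one_mem, 1, (Subgroup.center G).one_mem, (one_mul 1).symm⟩
  mul_mem' := by
    rintro x y ⟨a, ha, z, hz, rfl⟩ ⟨a', ha', z', hz', rfl⟩
    refine ⟨a * a', A.mul_mem ha ha', z * z', (Subgroup.center G).mul_mem hz hz', ?_⟩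
    have hcz : a' * z = z * a' := Subgroup.mem_center_iff.mp hz a'
    calc a * z * (a' * z') = a * (z * a' * z') := by
          rw [mul_assoc]; rw [mul_assoc z a' z']
      _ = a * (a' * z * z') := by rw [← hcz]
      _ = a * a' * (z * z') := by rw [mul_assoc a a']; rw [mul_assoc a' z z']
  inv_mem' := by
    rintro x ⟨a, ha, z, hz, rfl⟩
    refine ⟨a⁻¹, A.inv_mem ha, z⁻¹, (Subgroup.center G).inv_mem hz, ?_⟩
    rw [_root_.mul_inv_rev]
    exact (Subgroup.mem_center_iff.mp ((Subgroup.center G).inv_mem hz) a⁻¹).symm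

variable [TopologicalSpace F] [IsTopologicalRing F] (L : NALF F)

/-- The element `t = diag(ϖ, 1)`. -/
def tGL : GL (Fin 2) F :=
  Matrix.GeneralLinearGroup.mkOfDetNeZero !![L.ϖ, 0; 0, 1]
    (by rw [Matrix.det_fin_two_of]; simpa using L.ϖ_ne_zero)

lemma tGL_val : (tGL F L : Matrix (Fin 2) (Fin 2) F) = !![L.ϖ, 0; 0, 1] := rfl

/-- The unipotent element `u(x) = (1 x; 0 1)`. -/
def uGL (x : F) : GL (Fin 2) F :=
  Matrix.GeneralLinearGroup.mkOfDetNeZero !![1, x; 0, 1]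
    (by rw [Matrix.det_fin_two_of]; simp)

lemma uGL_val (x : F) : (uGL F x : Matrix (Fin 2) (Fin 2) F) = !![1, x; 0, 1] := rfl

/-- The element `ω = (0 1; ϖ 0)`. -/
def ωGL : GL (Fin 2) F :=
  Matrix.GeneralLinearGroup.mkOfDetNeZero !![0, 1; L.ϖ, 0]
    (by rw [Matrix.det_fin_two_of]; simpa using L.ϖ_ne_zero)

lemma ωGL_val : (ωGL F L : Matrix (Fin 2) (Fin 2) F) = !![0, 1; L.ϖ, 0] := rfl

/-- `B₀ = B ∩ K`: integral upper triangular matrices with unit diagonal. -/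
def B0gr : Subgroup (GL (Fin 2) F) := Bgr F ⊓ Kgr F L.O

/-- The subgroup `KZ`. -/
def KZgr : Subgroup (GL (Fin 2) F) := centMul (Kgr F L.O)

/-- The subgroup `B₀Z`. -/
def B0Zgr : Subgroup (GL (Fin 2) F) := centMul (B0gr F L)

/-- The monoid `B⁺ = ⋃ₙ B₀ Z tⁿ`, as a subset of `GL(2,F)`. -/
def BplusGL : Set (GL (Fin 2) F) :=
  {g | ∃ b ∈ B0Zgr F L, ∃ n : ℕ, g = b * (tGL F L) ^ n}

lemma tGL_mem_Bgr : tGL F L ∈ Bgr F := by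
  show (tGL F L : Matrix (Fin 2) (Fin 2) F) 1 0 = 0
  rw [tGL_val]
  simp

lemma uGL_mem_Bgr (x : F) : uGL F x ∈ Bgr F := by
  show (uGL F x : Matrix (Fin 2) (Fin 2) F) 1 0 = 0
  rw [uGL_val]
  simp

/-- `t` as an element of `B`. -/
def tB : ↥(Bgr F) := ⟨tGL F L, tGL_mem_Bgr F L⟩

/-- `u(x)` as an element of `B`. -/
def uB (x : F) : ↥(Bgr F) := ⟨uGL F x, uGL_mem_Bgr F x⟩

/-- The monoid `B⁺` as a subset of `B`. -/
def BplusB : Set ↥(Bgr F) := {b | (b : GL (Fin 2) F) ∈ BplusGL F L}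

/-- The subgroup `B₀Z` of `B`. -/
def B0Zb : Subgroup ↥(Bgr F) := (B0Zgr F L).comap (Bgr F).subtype

/-- The subgroup `B ∩ KZ` of `B`. -/
def BcapKZb : Subgroup ↥(Bgr F) := (KZgr F L).comap (Bgr F).subtype

/-- The compact group `U₀ = U(O_F)` of integral upper unipotent matrices, as a subset. -/
def U0set : Set (GL (Fin 2) F) :=
  {g | (g : Matrix (Fin 2) (Fin 2) F) 0 0 = 1 ∧ (g : Matrix (Fin 2) (Fin 2) F) 1 1 = 1 ∧
    (g : Matrix (Fin 2) (Fin 2) F) 1 0 = 0 ∧ (g : Matrix (Fin 2) (Fin 2) F) 0 1 ∈ L.O}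

/-- `U_m = U(p_F^m O_F)`, as a subset of `GL(2,F)`. -/
def UmSet (m : ℕ) : Set (GL (Fin 2) F) :=
  {g | (g : Matrix (Fin 2) (Fin 2) F) 0 0 = 1 ∧ (g : Matrix (Fin 2) (Fin 2) F) 1 1 = 1 ∧
    (g : Matrix (Fin 2) (Fin 2) F) 1 0 = 0 ∧
    ∃ y ∈ L.O, (g : Matrix (Fin 2) (Fin 2) F) 0 1 = L.ϖ ^ m * y}

/-- `U_m⁻ = U⁻(p_F^m O_F)`, the lower unipotent congruence subgroups, as a subset. -/
def UmMinusSet (m : ℕ) : Set (GL (Fin 2) F) :=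
  {g | (g : Matrix (Fin 2) (Fin 2) F) 0 0 = 1 ∧ (g : Matrix (Fin 2) (Fin 2) F) 1 1 = 1 ∧
    (g : Matrix (Fin 2) (Fin 2) F) 0 1 = 0 ∧
    ∃ y ∈ L.O, (g : Matrix (Fin 2) (Fin 2) F) 1 0 = L.ϖ ^ m * y}

/-- `T₀ = T(O_F)`: diagonal matrices with unit entries in `O_F`, as a subset. -/
def T0set : Set (GL (Fin 2) F) :=
  {g | (g : Matrix (Fin 2) (Fin 2) F) 1 0 = 0 ∧ (g : Matrix (Fin 2) (Fin 2) F) 0 1 = 0 ∧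
    (g : Matrix (Fin 2) (Fin 2) F) 0 0 ∈ L.O ∧ ((g : Matrix (Fin 2) (Fin 2) F) 0 0)⁻¹ ∈ L.O ∧
    (g : Matrix (Fin 2) (Fin 2) F) 1 1 ∈ L.O ∧ ((g : Matrix (Fin 2) (Fin 2) F) 1 1)⁻¹ ∈ L.O}

/-- The Iwahori subgroup `I ⊆ K`, as a subset: integral matrices whose reduction is
upper triangular. -/
def Iset : Set (GL (Fin 2) F) :=
  {g | g ∈ Kgr F L.O ∧ ∃ y ∈ L.O, (g : Matrix (Fin 2) (Fin 2) F) 1 0 = L.ϖ * y}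

/-- The pro-`p` Iwahori subgroup `I₁ ⊆ I`, as a subset: integral matrices whose
reduction is upper unipotent. -/
def I1set : Set (GL (Fin 2) F) :=
  {g | g ∈ Kgr F L.O ∧ (∃ y ∈ L.O, (g : Matrix (Fin 2) (Fin 2) F) 1 0 = L.ϖ * y) ∧
    (∃ y ∈ L.O, (g : Matrix (Fin 2) (Fin 2) F) 0 0 - 1 = L.ϖ * y) ∧
    (∃ y ∈ L.O, (g : Matrix (Fin 2) (Fin 2) F) 1 1 - 1 = L.ϖ * y)}

/-- The set `IZ`. -/
def IZset : Set (GL (Fin 2) F) :=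
  {g | ∃ i ∈ Iset F L, ∃ z ∈ Subgroup.center (GL (Fin 2) F), g = i * z}

/-- The set `ωIZ`. -/
def ωIZset : Set (GL (Fin 2) F) := {g | ∃ h ∈ IZset F L, g = ωGL F L * h}

section FieldLemmas
variable {F : Type} [Field F] [TopologicalSpace F] [IsTopologicalRing F] (L : NALF F)

lemma NALF.ball_mem_nhds (n : ℕ) : {x : F | ∃ y ∈ L.O, x = L.ϖ ^ n * y} ∈ nhds (0 : F) :=
  (L.nhds_zero _).mpr ⟨n, subset_rfl⟩

lemma NALF.exists_pow_mul_mem (x : F) : ∃ n : ℕ, L.ϖ ^ n * x ∈ L.O := by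
  have hc : Filter.Tendsto (fun p : F × F => p.1 * p.2) (nhds ((x, 0) : F × F)) (nhds (0 : F)) := by
    have h := Continuous.tendsto (continuous_mul (M := F)) (x, (0 : F))
    simpa using h
  have h0 := hc (L.ball_mem_nhds 0)
  rw [Filter.mem_map, nhds_prod_eq, Filter.mem_prod_iff] at h0
  obtain ⟨U, hU, Vv, hV, hUV⟩ := h0
  obtain ⟨n, hn⟩ := (L.nhds_zero Vv).mp hV
  refine ⟨n, ?_⟩
  have hx : (x, L.ϖ ^ n) ∈ U ×ˢ Vv :=
    ⟨mem_of_mem_nhds hU, hn ⟨1, L.O.one_mem, (mul_one _).symm⟩⟩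
  obtain ⟨y, hy, hxy⟩ := hUV hx
  simp only [pow_zero, one_mul] at hxy
  rw [mul_comm, hxy]
  exact hy

lemma NALF.exists_not_mem_ball {s : F} (hs : s ≠ 0) :
    ∃ m : ℕ, ¬ ∃ y ∈ L.O, s = L.ϖ ^ m * y := by
  obtain ⟨n, hn⟩ := L.exists_pow_mul_mem s⁻¹
  refine ⟨n + 1, ?_⟩
  rintro ⟨y, hy, rfl⟩
  have hy0 : y ≠ 0 := by
    rintro rfl; exact hs (by simp)
  have hπ : L.ϖ⁻¹ = (L.ϖ ^ n * (L.ϖ ^ (n + 1) * y)⁻¹) * y := by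
    have h1 : L.ϖ ^ n ≠ 0 := pow_ne_zero _ L.ϖ_ne_zero
    field_simp [pow_succ, L.ϖ_ne_zero, hy0]
    ring
  exact L.ϖ_not_unit (hπ ▸ L.O.mul_mem hn hy)

/-- Every nonzero element is `ϖ^{m₁}/ϖ^{n₁}` times a unit of `O`. -/
lemma NALF.exists_unit_form {s : F} (hs : s ≠ 0) :
    ∃ (n₁ m₁ : ℕ) (u : F), u ∈ L.O ∧ u⁻¹ ∈ L.O ∧ L.ϖ ^ n₁ * s = L.ϖ ^ m₁ * u := by
  obtain ⟨n0, hmem, hmin⟩ : ∃ n0 : ℕ, (L.ϖ ^ n0 * s ∈ L.O) ∧ ∀ k < n0, L.ϖ ^ k * s ∉ L.O := by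
    classical
    have hex : ∃ n : ℕ, L.ϖ ^ n * s ∈ L.O := L.exists_pow_mul_mem s
    exact ⟨Nat.find hex, Nat.find_spec hex, fun k hk => Nat.find_min hex hk⟩
  by_cases h0 : n0 = 0
  · -- s ∈ O; find the largest m with s ∈ ϖ^m O
    have hsO : s ∈ L.O := by simpa [h0] using hmem
    obtain ⟨m0, hm0spec, hm0min⟩ : ∃ m0 : ℕ, (¬ ∃ y ∈ L.O, s = L.ϖ ^ m0 * y) ∧
        ∀ k < m0, ∃ y ∈ L.O, s = L.ϖ ^ k * y := by
      classical
      have hex2 : ∃ m : ℕ, ¬ ∃ y ∈ L.O, s = L.ϖ ^ m * y := L.exists_not_mem_ball hs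
      exact ⟨Nat.find hex2, Nat.find_spec hex2, fun k hk => not_not.mp (Nat.find_min hex2 hk)⟩
    have hm0pos : m0 ≠ 0 := by
      intro hz
      rw [hz] at hm0spec
      exact hm0spec ⟨s, hsO, by simp⟩
    obtain ⟨m1, rfl⟩ : ∃ m1, m0 = m1 + 1 :=
      ⟨m0 - 1, (Nat.succ_pred_eq_of_pos (Nat.pos_of_ne_zero hm0pos)).symm⟩
    obtain ⟨w, hw, rfl⟩ := hm0min m1 (by omega)
    have hw0 : w ≠ 0 := by rintro rfl; exact hs (by simp)
    have hwinv : w⁻¹ ∈ L.O := by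
      by_contra hni
      have hdiv := L.ϖ_gen w hw hni
      exact hm0spec ⟨w / L.ϖ, hdiv, by
        rw [pow_succ]
        field_simp [L.ϖ_ne_zero]⟩
    exact ⟨0, m1, w, hw, hwinv, by simp⟩
  · -- n0 ≥ 1 : ϖ^n0 * s is a unit
    refine ⟨n0, 0, L.ϖ ^ n0 * s, hmem, ?_, by simp⟩
    by_contra hni
    have hdiv := L.ϖ_gen _ hmem hni
    have hmem' : L.ϖ ^ (n0 - 1) * s ∈ L.O := by
      have heq : L.ϖ ^ (n0 - 1) * s = L.ϖ ^ n0 * s / L.ϖ := by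
        obtain ⟨k, rfl⟩ : ∃ k, n0 = k + 1 :=
          ⟨n0 - 1, (Nat.succ_pred_eq_of_pos (Nat.pos_of_ne_zero h0)).symm⟩
        rw [pow_succ]
        field_simp [L.ϖ_ne_zero]
        ring
        congr 1; omega
      rw [heq]; exact hdiv
    exact hmin (n0 - 1) (by omega) hmem'

end FieldLemmas
section FieldLemmas2
variable {F : Type} [Field F] [TopologicalSpace F] [IsTopologicalRing F] (L : NALF F)

/-- The combined statement needed for eventual positivity. -/
lemma NALF.eventual_form {a d : F} (c : F) (ha : a ≠ 0) (hd : d ≠ 0) :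
    ∃ N : ℕ, ∀ n ≥ N, ∃ (u w : F) (m : ℕ),
      u ∈ L.O ∧ u⁻¹ ∈ L.O ∧ w ∈ L.O ∧
      L.ϖ ^ n * a = u * d * L.ϖ ^ m ∧ L.ϖ ^ n * c = w * d := by
  obtain ⟨n₁, m₁, u, hu, hui, huf⟩ := L.exists_unit_form (s := a / d) (div_ne_zero ha hd)
  obtain ⟨nc, hnc⟩ := L.exists_pow_mul_mem (c / d)
  refine ⟨max n₁ nc, fun n hn => ?_⟩
  have hn₁ : n₁ ≤ n := le_trans (le_max_left _ _) hn
  have hnc' : nc ≤ n := le_trans (le_max_right _ _) hn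
  refine ⟨u, L.ϖ ^ (n - nc) * (L.ϖ ^ nc * (c / d)), m₁ + (n - n₁),
    hu, hui, L.O.mul_mem (L.O.pow_mem L.ϖ_mem _) hnc, ?_, ?_⟩
  · have h1 : L.ϖ ^ n * (a / d) = L.ϖ ^ (n - n₁) * (L.ϖ ^ n₁ * (a / d)) := by
      rw [← mul_assoc, ← pow_add]
      congr 2
      omega
    rw [huf] at h1
    have h2 : L.ϖ ^ n * a = (L.ϖ ^ n * (a / d)) * d := by field_simp
    rw [h2, h1, pow_add]
    ring
  · have h2 : L.ϖ ^ n * c = (L.ϖ ^ n * (c / d)) * d := by field_simp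
    rw [h2]
    congr 1
    rw [← mul_assoc, ← pow_add]
    congr 2
    omega

end FieldLemmas2

section GLLemmas
variable {F : Type} [Field F] [TopologicalSpace F] [IsTopologicalRing F] (L : NALF F)

lemma tGL_pow_val (n : ℕ) :
    (((tGL F L) ^ n : GL (Fin 2) F) : Matrix (Fin 2) (Fin 2) F) = !![L.ϖ ^ n, 0; 0, 1] := by
  induction n with
  | zero => simp [Matrix.one_fin_two]
  | succ k ih =>
    rw [pow_succ, Units.val_mul, ih, tGL_val, Matrix.mul_fin_two]
    norm_num [pow_succ]

lemma tGL_pow_inv_val (n : ℕ) :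
    ((((tGL F L) ^ n)⁻¹ : GL (Fin 2) F) : Matrix (Fin 2) (Fin 2) F)
      = !![(L.ϖ ^ n)⁻¹, 0; 0, 1] := by
  have hne : L.ϖ ^ n ≠ 0 := pow_ne_zero _ L.ϖ_ne_zero
  refine Units.inv_eq_of_mul_eq_one_right ?_
  rw [tGL_pow_val, Matrix.mul_fin_two]
  norm_num [mul_inv_cancel₀ hne]
  exact Matrix.one_fin_two.symm

lemma conj_mat {p : F} (M : Matrix (Fin 2) (Fin 2) F) (hM : M 1 0 = 0) :
    !![p, 0; 0, 1] * M * !![p⁻¹, 0; 0, 1] = !![p * M 0 0 * p⁻¹, p * M 0 1; 0, M 1 1] := by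
  obtain ⟨a, b, c, d, rfl⟩ : ∃ a b c d, M = !![a, b; c, d] := ⟨_, _, _, _, Matrix.eta_fin_two M⟩
  have hc : c = 0 := by simpa using hM
  rw [hc, Matrix.mul_fin_two, Matrix.mul_fin_two]
  ext i j
  fin_cases i <;> fin_cases j <;> simp <;> ring

lemma mem_Bgr_iff (g : GL (Fin 2) F) :
    g ∈ Bgr F ↔ (g : Matrix (Fin 2) (Fin 2) F) 1 0 = 0 := Iff.rfl

lemma mem_BplusGL_iff (g : GL (Fin 2) F) :
    g ∈ BplusGL F L ↔ ∃ b ∈ B0Zgr F L, ∃ n : ℕ, g = b * (tGL F L) ^ n := Iff.rfl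

/-- Conjugation by `t^n` (n ≥ 0) preserves `B₀`. -/
lemma tpow_conj_B0gr {b : GL (Fin 2) F} (hb : b ∈ B0gr F L) (n : ℕ) :
    (tGL F L) ^ n * b * ((tGL F L) ^ n)⁻¹ ∈ B0gr F L := by
  obtain ⟨hbB, hbK1, hbK2⟩ : ((b : Matrix (Fin 2) (Fin 2) F) 1 0 = 0) ∧
      (∀ i j, (b : Matrix (Fin 2) (Fin 2) F) i j ∈ L.O) ∧
      (∀ i j, ((b⁻¹ : GL (Fin 2) F) : Matrix (Fin 2) (Fin 2) F) i j ∈ L.O) := by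
    obtain ⟨h1, h2, h3⟩ := Subgroup.mem_inf.mp hb
    exact ⟨h1, h2, h3⟩
  have hval : (((tGL F L) ^ n * b * ((tGL F L) ^ n)⁻¹ : GL (Fin 2) F) :
      Matrix (Fin 2) (Fin 2) F)
      = !![L.ϖ ^ n * (b : Matrix (Fin 2) (Fin 2) F) 0 0 * (L.ϖ ^ n)⁻¹,
          L.ϖ ^ n * (b : Matrix (Fin 2) (Fin 2) F) 0 1; 0,
          (b : Matrix (Fin 2) (Fin 2) F) 1 1] := by
    rw [Units.val_mul, Units.val_mul, tGL_pow_val, tGL_pow_inv_val]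
    exact conj_mat _ hbB
  have hbiB : ((b⁻¹ : GL (Fin 2) F) : Matrix (Fin 2) (Fin 2) F) 1 0 = 0 :=
    (Bgr F).inv_mem (Subgroup.mem_inf.mp hb).1
  have hinv : ((((tGL F L) ^ n * b * ((tGL F L) ^ n)⁻¹)⁻¹ : GL (Fin 2) F) :
      Matrix (Fin 2) (Fin 2) F)
      = !![L.ϖ ^ n * ((b⁻¹ : GL (Fin 2) F) : Matrix (Fin 2) (Fin 2) F) 0 0 * (L.ϖ ^ n)⁻¹,
          L.ϖ ^ n * ((b⁻¹ : GL (Fin 2) F) : Matrix (Fin 2) (Fin 2) F) 0 1; 0,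
          ((b⁻¹ : GL (Fin 2) F) : Matrix (Fin 2) (Fin 2) F) 1 1] := by
    have heq : ((tGL F L) ^ n * b * ((tGL F L) ^ n)⁻¹)⁻¹
        = (tGL F L) ^ n * b⁻¹ * ((tGL F L) ^ n)⁻¹ := by group
    rw [heq, Units.val_mul, Units.val_mul, tGL_pow_val, tGL_pow_inv_val]
    exact conj_mat _ hbiB
  have hbK2' : ∀ i j, (((b : Matrix (Fin 2) (Fin 2) F))⁻¹) i j ∈ L.O := by
    intro i j
    have h := hbK2 i j
    rwa [Matrix.coe_units_inv] at h
  have hbK2' : ∀ i j, (((b : Matrix (Fin 2) (Fin 2) F))⁻¹) i j ∈ L.O := by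
    intro i j
    have h := hbK2 i j
    rwa [Matrix.coe_units_inv] at h
  have hne : L.ϖ ^ n ≠ 0 := pow_ne_zero _ L.ϖ_ne_zero
  have hcan : ∀ x : F, L.ϖ ^ n * x * (L.ϖ ^ n)⁻¹ = x := fun x => by
    field_simp
  refine Subgroup.mem_inf.mpr ⟨?_, ?_, ?_⟩
  · show _ = (0 : F)
    rw [hval]; simp
  · intro i j
    rw [hval]
    fin_cases i <;> fin_cases j <;> simp [hcan]
    · exact hbK1 0 0
    · exact L.O.mul_mem (L.O.pow_mem L.ϖ_mem n) (hbK1 0 1)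
    · exact hbK1 1 1
  · intro i j
    rw [hinv]
    fin_cases i <;> fin_cases j <;> simp [hcan]
    · exact hbK2' 0 0
    · exact L.O.mul_mem (L.O.pow_mem L.ϖ_mem n) (hbK2' 0 1)
    · exact hbK2' 1 1

lemma tpow_conj_B0Zgr {c : GL (Fin 2) F} (hc : c ∈ B0Zgr F L) (n : ℕ) :
    (tGL F L) ^ n * c * ((tGL F L) ^ n)⁻¹ ∈ B0Zgr F L := by
  obtain ⟨b0, hb0, z, hz, rfl⟩ := hc
  refine ⟨(tGL F L) ^ n * b0 * ((tGL F L) ^ n)⁻¹, tpow_conj_B0gr L hb0 n, z, hz, ?_⟩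
  have hcz : ((tGL F L) ^ n)⁻¹ * z = z * ((tGL F L) ^ n)⁻¹ :=
    Subgroup.mem_center_iff.mp hz _
  calc (tGL F L) ^ n * (b0 * z) * ((tGL F L) ^ n)⁻¹
      = (tGL F L) ^ n * b0 * (z * ((tGL F L) ^ n)⁻¹) := by group
    _ = (tGL F L) ^ n * b0 * (((tGL F L) ^ n)⁻¹ * z) := by rw [hcz]
    _ = (tGL F L) ^ n * b0 * ((tGL F L) ^ n)⁻¹ * z := by group

lemma BplusGL_mul_left {c g : GL (Fin 2) F} (hc : c ∈ B0Zgr F L) (hg : g ∈ BplusGL F L) :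
    c * g ∈ BplusGL F L := by
  obtain ⟨b, hb, n, rfl⟩ := hg
  exact ⟨c * b, (B0Zgr F L).mul_mem hc hb, n, (mul_assoc _ _ _).symm⟩

lemma BplusGL_mul_right {g c : GL (Fin 2) F} (hg : g ∈ BplusGL F L) (hc : c ∈ B0Zgr F L) :
    g * c ∈ BplusGL F L := by
  obtain ⟨b, hb, n, rfl⟩ := hg
  refine ⟨b * ((tGL F L) ^ n * c * ((tGL F L) ^ n)⁻¹),
    (B0Zgr F L).mul_mem hb (tpow_conj_B0Zgr L hc n), n, ?_⟩
  group

/-- Scalar matrices as elements of `GL(2,F)`. -/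
def zUnit (d : F) (hd : d ≠ 0) : GL (Fin 2) F where
  val := d • (1 : Matrix (Fin 2) (Fin 2) F)
  inv := d⁻¹ • (1 : Matrix (Fin 2) (Fin 2) F)
  val_inv := by
    rw [Matrix.smul_mul, Matrix.mul_smul, smul_smul, mul_inv_cancel₀ hd, one_smul, Matrix.mul_one]
  inv_val := by
    rw [Matrix.smul_mul, Matrix.mul_smul, smul_smul, inv_mul_cancel₀ hd, one_smul, Matrix.mul_one]

lemma zUnit_central (d : F) (hd : d ≠ 0) : zUnit d hd ∈ Subgroup.center (GL (Fin 2) F) := by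
  refine Subgroup.mem_center_iff.mpr fun g => ?_
  refine Units.ext ?_
  show (g : Matrix (Fin 2) (Fin 2) F) * (d • 1) = (d • 1) * (g : Matrix (Fin 2) (Fin 2) F)
  rw [Matrix.mul_smul, Matrix.smul_mul, Matrix.mul_one, Matrix.one_mul]

lemma GL_entries_ne_zero {g : GL (Fin 2) F} (hg : g ∈ Bgr F) :
    (g : Matrix (Fin 2) (Fin 2) F) 0 0 ≠ 0 ∧ (g : Matrix (Fin 2) (Fin 2) F) 1 1 ≠ 0 := by
  have hdet : (g : Matrix (Fin 2) (Fin 2) F).det *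
      ((g⁻¹ : GL (Fin 2) F) : Matrix (Fin 2) (Fin 2) F).det = 1 := by
    rw [← Matrix.det_mul, ← Units.val_mul, mul_inv_cancel, Units.val_one, Matrix.det_one]
  have hne : (g : Matrix (Fin 2) (Fin 2) F).det ≠ 0 := left_ne_zero_of_mul_eq_one hdet
  rw [Matrix.det_fin_two, hg, mul_zero, sub_zero] at hne
  exact ⟨left_ne_zero_of_mul hne, right_ne_zero_of_mul hne⟩

/-- Eventual positivity: for every `g ∈ B`, `tⁿ g ∈ B⁺` for all large `n`. -/
lemma eventually_mem_BplusGL {g : GL (Fin 2) F} (hg : g ∈ Bgr F) :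
    ∃ N : ℕ, ∀ n ≥ N, (tGL F L) ^ n * g ∈ BplusGL F L := by
  obtain ⟨ha, hd⟩ := GL_entries_ne_zero (F := F) hg
  set a := (g : Matrix (Fin 2) (Fin 2) F) 0 0 with hadef
  set c := (g : Matrix (Fin 2) (Fin 2) F) 0 1 with hcdef
  set d := (g : Matrix (Fin 2) (Fin 2) F) 1 1 with hddef
  obtain ⟨N, hN⟩ := L.eventual_form c ha hd
  refine ⟨N, fun n hn => ?_⟩
  obtain ⟨u, w, m, hu, hui, hw, h1, h2⟩ := hN n hn
  have hu0 : u ≠ 0 := by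
    intro h0
    apply mul_ne_zero (pow_ne_zero n L.ϖ_ne_zero) ha
    rw [h1, h0, zero_mul, zero_mul]
  have hwu : u⁻¹ * w ∈ L.O := L.O.mul_mem hui hw
  -- the unipotent-diagonal part
  refine ⟨(⟨!![u, w; 0, 1], !![u⁻¹, -(u⁻¹ * w); 0, 1], ?_, ?_⟩ : GL (Fin 2) F) * zUnit d hd,
    ⟨_, ?_, _, zUnit_central d hd, rfl⟩, m, ?_⟩
  · rw [Matrix.mul_fin_two]
    ext i j
    fin_cases i <;> fin_cases j <;>
      simp [Matrix.one_apply, mul_inv_cancel₀ hu0, inv_mul_cancel₀ hu0] <;> field_simp <;> ring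
  · rw [Matrix.mul_fin_two]
    ext i j
    fin_cases i <;> fin_cases j <;>
      simp [Matrix.one_apply, mul_inv_cancel₀ hu0, inv_mul_cancel₀ hu0] <;> field_simp
  · -- membership in B0gr
    refine Subgroup.mem_inf.mpr ⟨?_, ?_, ?_⟩
    · show !![u, w; 0, 1] 1 0 = 0
      simp
    · intro i j
      show !![u, w; 0, 1] i j ∈ L.O
      fin_cases i <;> fin_cases j <;> simp [hu, hw, L.O.zero_mem, L.O.one_mem]
    · intro i j
      show !![u⁻¹, -(u⁻¹ * w); 0, 1] i j ∈ L.O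
      fin_cases i <;> fin_cases j <;>
        simp [hui, L.O.neg_mem hwu, L.O.zero_mem, L.O.one_mem]
  · refine Units.ext ?_
    rw [Units.val_mul, Units.val_mul, Units.val_mul, tGL_pow_val, tGL_pow_val]
    show !![L.ϖ ^ n, 0; 0, 1] * (g : Matrix (Fin 2) (Fin 2) F)
      = !![u, w; 0, 1] * (d • 1) * !![L.ϖ ^ m, 0; 0, 1]
    have hgm : (g : Matrix (Fin 2) (Fin 2) F) = !![a, c; 0, d] := by
      rw [hadef, hcdef, hddef, ← hg]
      exact Matrix.eta_fin_two _
    rw [hgm]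
    have hsm : (d • (1 : Matrix (Fin 2) (Fin 2) F)) = !![d, 0; 0, d] := by
      ext i j
      fin_cases i <;> fin_cases j <;> simp [Matrix.one_apply]
    rw [hsm, Matrix.mul_fin_two, Matrix.mul_fin_two, Matrix.mul_fin_two]
    ext i j
    fin_cases i <;> fin_cases j <;> simp
    · linear_combination h1
    · linear_combination h2

end GLLemmas

section BLevel
variable {F : Type} [Field F] [TopologicalSpace F] [IsTopologicalRing F] (L : NALF F)

lemma mem_B0Zb_iff (c : ↥(Bgr F)) :
    c ∈ B0Zb F L ↔ (c : GL (Fin 2) F) ∈ B0Zgr F L := Iff.rfl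

lemma mem_BplusB_iff (b : ↥(Bgr F)) :
    b ∈ BplusB F L ↔ (b : GL (Fin 2) F) ∈ BplusGL F L := Iff.rfl

lemma BplusB_mul_left {c b : ↥(Bgr F)} (hc : c ∈ B0Zb F L) (hb : b ∈ BplusB F L) :
    c * b ∈ BplusB F L := by
  rw [mem_BplusB_iff] at hb ⊢
  rw [Subgroup.coe_mul]
  exact BplusGL_mul_left L ((mem_B0Zb_iff L c).mp hc) hb

lemma BplusB_mul_right {b c : ↥(Bgr F)} (hb : b ∈ BplusB F L) (hc : c ∈ B0Zb F L) :
    b * c ∈ BplusB F L := by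
  rw [mem_BplusB_iff] at hb ⊢
  rw [Subgroup.coe_mul]
  exact BplusGL_mul_right L hb ((mem_B0Zb_iff L c).mp hc)

lemma BplusB_mul_left_iff {c : ↥(Bgr F)} (hc : c ∈ B0Zb F L) (b : ↥(Bgr F)) :
    c * b ∈ BplusB F L ↔ b ∈ BplusB F L := by
  constructor
  · intro h
    have h2 := BplusB_mul_left L ((B0Zb F L).inv_mem hc) h
    rwa [← mul_assoc, inv_mul_cancel, one_mul] at h2
  · exact BplusB_mul_left L hc

lemma BplusB_mul_right_iff (b : ↥(Bgr F)) {c : ↥(Bgr F)} (hc : c ∈ B0Zb F L) :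
    b * c ∈ BplusB F L ↔ b ∈ BplusB F L := by
  constructor
  · intro h
    have h2 := BplusB_mul_right L h ((B0Zb F L).inv_mem hc)
    rwa [mul_assoc, mul_inv_cancel, mul_one] at h2
  · exact fun h => BplusB_mul_right L h hc

/-- Positivity of the coset of `h`: `h⁻¹ ∈ B⁺`. -/
def posB (h : ↥(Bgr F)) : Prop := h⁻¹ ∈ BplusB F L

lemma posB_mul_left {c : ↥(Bgr F)} (hc : c ∈ B0Zb F L) (h : ↥(Bgr F)) :
    posB L (c * h) ↔ posB L h := by
  unfold posB
  rw [_root_.mul_inv_rev]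
  exact BplusB_mul_right_iff L _ ((B0Zb F L).inv_mem hc)

lemma posB_mul_right (h : ↥(Bgr F)) {c : ↥(Bgr F)} (hc : c ∈ B0Zb F L) :
    posB L (h * c) ↔ posB L h := by
  unfold posB
  rw [_root_.mul_inv_rev]
  exact BplusB_mul_left_iff L ((B0Zb F L).inv_mem hc) _

lemma eventually_mem_BplusB (g : ↥(Bgr F)) :
    ∃ N : ℕ, ∀ n ≥ N, (tB F L) ^ n * g ∈ BplusB F L := by
  obtain ⟨N, hN⟩ := eventually_mem_BplusGL L g.2
  refine ⟨N, fun n hn => ?_⟩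
  rw [mem_BplusB_iff, Subgroup.coe_mul, SubmonoidClass.coe_pow]
  exact hN n hn

/-- If `b x⁻¹ ∈ B⁺` then `b = c tⁿ x` with `c ∈ B₀Z`. -/
lemma Bplus_decomp {b x : ↥(Bgr F)} (hbx : b * x⁻¹ ∈ BplusB F L) :
    ∃ c ∈ B0Zb F L, ∃ n : ℕ, b = c * (tB F L) ^ n * x := by
  obtain ⟨c₁, hc₁, n, hn⟩ := (mem_BplusB_iff L _).mp hbx
  refine ⟨b * x⁻¹ * ((tB F L) ^ n)⁻¹, ?_, n, ?_⟩
  · rw [mem_B0Zb_iff]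
    have hco : ((b * x⁻¹ * ((tB F L) ^ n)⁻¹ : ↥(Bgr F)) : GL (Fin 2) F) = c₁ := by
      have ht : ((((tB F L) ^ n)⁻¹ : ↥(Bgr F)) : GL (Fin 2) F) = ((tGL F L) ^ n)⁻¹ := by
        rw [InvMemClass.coe_inv, SubmonoidClass.coe_pow]
        rfl
      rw [Subgroup.coe_mul, hn, ht]
      group
    rw [hco]
    exact hc₁
  · group

end BLevel

section MainPart
variable (o : Type) [CommRing o]

/-- Acting by `c` maps `gspan S W` into `gspan T W` provided `c • S ⊆ T`. -/
lemma gspan_smul_mem {H : Type} [Group H] {V : Type} [AddCommGroup V] [Module o V]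
    [DistribMulAction H V] [SMulCommClass H o V] {S T : Set H} {W : Set V} {c : H}
    (hc : ∀ s ∈ S, c * s ∈ T) :
    ∀ v ∈ gspan o V S W, c • v ∈ gspan o V T W := by
  intro v hv
  induction hv using Submodule.span_induction with
  | mem x hx =>
    obtain ⟨s, hs, w, hw, rfl⟩ := hx
    rw [← mul_smul]
    exact Submodule.subset_span ⟨c * s, hc s hs, w, hw, rfl⟩
  | zero => rw [smul_zero]; exact Submodule.zero_mem _
  | add x y _ _ hx hy => rw [smul_add]; exact Submodule.add_mem _ hx hy
  | smul a x _ hx => rw [smul_comm]; exact Submodule.smul_mem _ a hx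

lemma gspan_mono_right {H : Type} (V : Type) [AddCommGroup V] [Module o V] [SMul H V]
    (S : Set H) {W W' : Set V} (h : W ⊆ W') : gspan o V S W ≤ gspan o V S W' := by
  apply Submodule.span_mono
  rintro v ⟨s, hs, w, hw, rfl⟩
  exact ⟨s, hs, w, h hw, rfl⟩

variable {F : Type} [Field F] [TopologicalSpace F] [IsTopologicalRing F] (L : NALF F)
variable {V : Type} [AddCommGroup V] [Module o V]
variable [DistribMulAction (↥(Bgr F)) V] [SMulCommClass (↥(Bgr F)) o V]
variable {V0 : Submodule o V}

/-- Truncation of a function to positive cosets. -/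
def prPosFun (f : ↥(Bgr F) → V) : ↥(Bgr F) → V :=
  fun h => if posB L h then f h else 0

lemma prPosFun_mem {f : ↥(Bgr F) → V} (hf : f ∈ Ind o (B0Zb F L) V0) :
    prPosFun L f ∈ Ind o (B0Zb F L) V0 := by
  obtain ⟨h1, h2, X, hX⟩ := hf
  refine ⟨fun h => ?_, fun s hs h => ?_, X, fun h hh => ?_⟩
  · show (if posB L h then f h else 0) ∈ V0
    split_ifs
    · exact h1 h
    · exact V0.zero_mem
  · show (if posB L (s * h) then f (s * h) else 0) = s • (if posB L h then f h else 0)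
    rw [if_congr (posB_mul_left L hs h) rfl rfl]
    split_ifs with hp
    · exact h2 s hs h
    · rw [smul_zero]
  · refine hX h ?_
    intro h0
    apply hh
    show (if posB L h then f h else 0) = 0
    split_ifs <;> simp [h0]

/-- The projection `pr⁺` as an `o`-linear endomorphism of the compact induction. -/
def prP (V0 : Submodule o V) : ↥(Ind o (B0Zb F L) V0) →ₗ[o] ↥(Ind o (B0Zb F L) V0) where
  toFun f := ⟨prPosFun L f.1, prPosFun_mem o L f.2⟩
  map_add' f g := Subtype.ext (funext fun h => by
    show (if posB L h then (f.1 + g.1) h else 0)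
        = (if posB L h then f.1 h else 0) + (if posB L h then g.1 h else 0)
    rw [Pi.add_apply]
    split_ifs <;> simp)
  map_smul' a f := Subtype.ext (funext fun h => by
    show (if posB L h then (a • f.1) h else 0) = a • (if posB L h then f.1 h else 0)
    rw [Pi.smul_apply]
    split_ifs <;> simp)

lemma prP_apply (f : ↥(Ind o (B0Zb F L) V0)) (h : ↥(Bgr F)) :
    (prP o L V0 f).1 h = if posB L h then f.1 h else 0 := rfl

lemma prP_equivar {c : ↥(Bgr F)} (hc : c ∈ B0Zb F L) (f : ↥(Ind o (B0Zb F L) V0)) :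
    prP o L V0 (c • f) = c • prP o L V0 f := by
  refine Subtype.ext (funext fun h => ?_)
  show (if posB L h then (c • f : ↥(Ind o (B0Zb F L) V0)).1 h else 0)
      = ((c • prP o L V0 f : ↥(Ind o (B0Zb F L) V0)).1 h)
  rw [ind_smul_apply, ind_smul_apply, prP_apply, if_congr (posB_mul_right L h hc).symm rfl rfl]

variable (hst : IsStableSub o V ((B0Zb F L : Subgroup ↥(Bgr F)) : Set ↥(Bgr F)) V0)

lemma unit_smul_apply {v : V} (hv : v ∈ V0) (x h : ↥(Bgr F)) :
    (x⁻¹ • unitElt o hst hv : ↥(Ind o (B0Zb F L) V0)).1 h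
      = if h * x⁻¹ ∈ B0Zb F L then (h * x⁻¹) • v else 0 := by
  rw [ind_smul_apply]
  rfl

lemma prP_unit {v : V} (hv : v ∈ V0) (x : ↥(Bgr F)) :
    prP o L V0 (x⁻¹ • unitElt o hst hv)
      = if posB L x then x⁻¹ • unitElt o hst hv else 0 := by
  refine Subtype.ext (funext fun h => ?_)
  rw [prP_apply, unit_smul_apply]
  by_cases hB : h * x⁻¹ ∈ B0Zb F L
  · have hph : posB L h ↔ posB L x := by
      have h1 := posB_mul_left L hB x
      rwa [inv_mul_cancel_right] at h1
    rw [if_pos hB]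
    by_cases hx : posB L x
    · rw [if_pos (hph.mpr hx), if_pos hx, unit_smul_apply, if_pos hB]
    · rw [if_neg (fun hh => hx (hph.mp hh)), if_neg hx]
      rfl
  · rw [if_neg hB]
    have hz : ((if posB L x then x⁻¹ • unitElt o hst hv else 0 :
        ↥(Ind o (B0Zb F L) V0))).1 h = 0 := by
      split_ifs
      · rw [unit_smul_apply, if_neg hB]
      · rfl
    rw [hz]
    split_ifs <;> rfl

variable {P : ↥(Ind o (B0Zb F L) V0) →ₗ[o] V}

lemma P_unit_smul (hP : IsPresMap o hst P) {v : V} (hv : v ∈ V0) (x : ↥(Bgr F)) :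
    P (x⁻¹ • unitElt o hst hv) = x⁻¹ • v := by
  rw [hP.1, hP.2]

/-- The main induction: truncations of presentable elements land in `<B⁺V₀>` resp.
`<(B-B⁺)V₀>`. -/
lemma main_ind (hP : IsPresMap o hst P) :
    ∀ (n : ℕ) (X : Finset ↥(Bgr F)) (f : ↥(Ind o (B0Zb F L) V0)),
      X.card ≤ n →
      (∀ h, f.1 h ≠ 0 → ∃ s ∈ B0Zb F L, ∃ x ∈ X, h = s * x) →
      P (prP o L V0 f) ∈ gspan o V (BplusB F L) (V0 : Set V) ∧
      P (f - prP o L V0 f) ∈ gspan o V ((BplusB F L)ᶜ) (V0 : Set V) := by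
  have hzero : ∀ (f : ↥(Ind o (B0Zb F L) V0)),
      (∀ h, f.1 h ≠ 0 → False) →
      P (prP o L V0 f) ∈ gspan o V (BplusB F L) (V0 : Set V) ∧
      P (f - prP o L V0 f) ∈ gspan o V ((BplusB F L)ᶜ) (V0 : Set V) := by
    intro f hf
    have hf0 : f = 0 := by
      refine Subtype.ext (funext fun h => ?_)
      by_contra hne
      exact hf h (by simpa using hne)
    rw [hf0]
    simp only [map_zero, sub_zero]
    exact ⟨Submodule.zero_mem _, Submodule.zero_mem _⟩
  intro n
  induction n with
  | zero =>
    intro X f hcard hsupp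
    have hX : X = ∅ := Finset.card_eq_zero.mp (Nat.le_antisymm hcard (Nat.zero_le _))
    refine hzero f fun h hne => ?_
    obtain ⟨s, _, x, hx, _⟩ := hsupp h hne
    simp [hX] at hx
  | succ k ih =>
    intro X f hcard hsupp
    by_cases hXe : X.Nonempty
    · obtain ⟨x, hx⟩ := hXe
      have hvmem : f.1 x ∈ V0 := f.2.1 x
      set f1 : ↥(Ind o (B0Zb F L) V0) := x⁻¹ • unitElt o hst hvmem with hf1
      have hf1app : ∀ h, f1.1 h = if h * x⁻¹ ∈ B0Zb F L then (h * x⁻¹) • f.1 x else 0 :=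
        fun h => unit_smul_apply o L hst hvmem x h
      set g := f - f1 with hg
      have hgapp : ∀ h, g.1 h = f.1 h - f1.1 h := fun h => rfl
      have hgsupp : ∀ h, g.1 h ≠ 0 → ∃ s ∈ B0Zb F L, ∃ y ∈ X.erase x, h = s * y := by
        intro h hne
        have honcoset : ∀ s ∈ B0Zb F L, g.1 (s * x) = 0 := by
          intro s hs
          rw [hgapp, hf1app, mul_assoc, mul_inv_cancel, mul_one, if_pos hs, f.2.2.1 s hs x,
            sub_self]
        have hfsupp : ∃ s ∈ B0Zb F L, ∃ y ∈ X, h = s * y := by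
          by_cases hfh : f.1 h ≠ 0
          · exact hsupp h hfh
          · push_neg at hfh
            have hne1 : f1.1 h ≠ 0 := by
              intro h0
              exact hne (by rw [hgapp, hfh, h0, sub_zero])
            rw [hf1app] at hne1
            by_cases hB : h * x⁻¹ ∈ B0Zb F L
            · exact ⟨h * x⁻¹, hB, x, hx, by group⟩
            · rw [if_neg hB] at hne1; exact absurd rfl hne1
        obtain ⟨s, hs, y, hy, rfl⟩ := hfsupp
        by_cases hyx : y = x
        · subst hyx
          exact absurd (honcoset s hs) hne
        · exact ⟨s, hs, y, Finset.mem_erase.mpr ⟨hyx, hy⟩, rfl⟩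
      have hcard' : (X.erase x).card ≤ k := by
        have hce := Finset.card_erase_of_mem hx
        omega
      obtain ⟨ihg1, ihg2⟩ := ih (X.erase x) g hcard' hgsupp
      have hfeq : f = g + f1 := by rw [hg, sub_add_cancel]
      have hpr1 := prP_unit o L hst hvmem x
      constructor
      · rw [hfeq, map_add, map_add]
        refine Submodule.add_mem _ ihg1 ?_
        rw [hpr1]
        by_cases hpx : posB L x
        · rw [if_pos hpx, P_unit_smul o L hst hP hvmem x]
          exact Submodule.subset_span ⟨x⁻¹, hpx, f.1 x, hvmem, rfl⟩
        · rw [if_neg hpx, map_zero]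
          exact Submodule.zero_mem _
      · rw [hfeq]
        have hsplit : (g + f1) - prP o L V0 (g + f1)
            = (g - prP o L V0 g) + (f1 - prP o L V0 f1) := by
          rw [map_add]
          abel
        rw [hsplit, map_add]
        refine Submodule.add_mem _ ihg2 ?_
        rw [hpr1]
        by_cases hpx : posB L x
        · rw [if_pos hpx, sub_self, map_zero]
          exact Submodule.zero_mem _
        · rw [if_neg hpx, sub_zero, P_unit_smul o L hst hP hvmem x]
          exact Submodule.subset_span ⟨x⁻¹, hpx, f.1 x, hvmem, rfl⟩
    · refine hzero f fun h hne => ?_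
      obtain ⟨s, _, y, hy, _⟩ := hsupp h hne
      exact hXe ⟨y, hy⟩

lemma pr_mem (hP : IsPresMap o hst P) (f : ↥(Ind o (B0Zb F L) V0)) :
    P (prP o L V0 f) ∈ gspan o V (BplusB F L) (V0 : Set V) ∧
    P (f - prP o L V0 f) ∈ gspan o V ((BplusB F L)ᶜ) (V0 : Set V) := by
  obtain ⟨X, hX⟩ := f.2.2.2
  exact main_ind o L hst hP X.card X f le_rfl hX

lemma Wplus_le (hP : IsPresMap o hst P) :
    gspan o V (BplusB F L) (V0 : Set V)
      ≤ Submodule.map P (LinearMap.ker (LinearMap.id - prP o L V0)) := by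
  apply Submodule.span_le.mpr
  rintro v ⟨s, hs, w, hw, rfl⟩
  refine Submodule.mem_map.mpr ⟨s • unitElt o hst hw, ?_, ?_⟩
  · rw [LinearMap.mem_ker, LinearMap.sub_apply, LinearMap.id_apply, sub_eq_zero]
    have hu := prP_unit o L hst hw s⁻¹
    rw [inv_inv] at hu
    have hpos : posB L s⁻¹ := by
      show s⁻¹⁻¹ ∈ BplusB F L
      rwa [inv_inv]
    rw [hu, if_pos hpos]
  · have := P_unit_smul o L hst hP hw s⁻¹
    rwa [inv_inv] at this

lemma Wminus_le (hP : IsPresMap o hst P) :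
    gspan o V ((BplusB F L)ᶜ) (V0 : Set V)
      ≤ Submodule.map P (LinearMap.ker (prP o L V0)) := by
  apply Submodule.span_le.mpr
  rintro v ⟨s, hs, w, hw, rfl⟩
  refine Submodule.mem_map.mpr ⟨s • unitElt o hst hw, ?_, ?_⟩
  · rw [LinearMap.mem_ker]
    have hu := prP_unit o L hst hw s⁻¹
    rw [inv_inv] at hu
    have hpos : ¬ posB L s⁻¹ := by
      show ¬ s⁻¹⁻¹ ∈ BplusB F L
      rwa [inv_inv]
    rw [hu, if_neg hpos]
  · have := P_unit_smul o L hst hP hw s⁻¹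
    rwa [inv_inv] at this

/-- `Δ = P(pr⁺(R))`. -/
lemma delta_eq (hP : IsPresMap o hst P) :
    gspan o V (BplusB F L) (V0 : Set V) ⊓ gspan o V ((BplusB F L)ᶜ) (V0 : Set V)
      = Submodule.map (P ∘ₗ prP o L V0) (LinearMap.ker P) := by
  apply le_antisymm
  · rintro v ⟨hvp, hvm⟩
    obtain ⟨fp, hfp, hfpP⟩ := Submodule.mem_map.mp (Wplus_le o L hst hP hvp)
    obtain ⟨fm, hfm, hfmP⟩ := Submodule.mem_map.mp (Wminus_le o L hst hP hvm)
    rw [LinearMap.mem_ker, LinearMap.sub_apply, LinearMap.id_apply, sub_eq_zero] at hfp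
    rw [LinearMap.mem_ker] at hfm
    refine Submodule.mem_map.mpr ⟨fp - fm, ?_, ?_⟩
    · rw [LinearMap.mem_ker, map_sub, hfpP, hfmP, sub_self]
    · rw [LinearMap.comp_apply, map_sub, hfm, sub_zero, ← hfp, hfpP]
  · intro v hv
    obtain ⟨r, hr, rfl⟩ := Submodule.mem_map.mp hv
    rw [LinearMap.mem_ker] at hr
    rw [LinearMap.comp_apply]
    refine ⟨(pr_mem o L hst hP r).1, ?_⟩
    have h2 := (pr_mem o L hst hP r).2
    rw [map_sub, hr, zero_sub] at h2
    have := Submodule.neg_mem _ h2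
    rwa [neg_neg] at this

/-- The key finiteness case analysis. -/
lemma case_analysis (hP : IsPresMap o hst P) {r : ↥(Ind o (B0Zb F L) V0)} (hr : P r = 0)
    (XS : Finset ↥(Bgr F))
    (hsupp : ∀ h, r.1 h ≠ 0 → ∃ s ∈ B0Zb F L, ∃ x ∈ XS, h = s * x)
    (N : ℕ) (hN : ∀ x ∈ XS, ∀ x' ∈ XS, ∀ n ≥ N, (tB F L) ^ n * (x * x'⁻¹) ∈ BplusB F L)
    (b : ↥(Bgr F)) :
    P (prP o L V0 (b • r)) ∈ gspan o V ((B0Zb F L : Subgroup ↥(Bgr F)) : Set ↥(Bgr F))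
      {v : V | ∃ n < N, ∃ x ∈ XS, v = P (prP o L V0 (((tB F L) ^ n * x) • r))} := by
  have hsmul_supp : ∀ h : ↥(Bgr F), (b • r : ↥(Ind o (B0Zb F L) V0)).1 h ≠ 0 →
      ∃ s ∈ B0Zb F L, ∃ x ∈ XS, h = s * (x * b⁻¹) := by
    intro h hne
    rw [ind_smul_apply] at hne
    obtain ⟨s, hs, x, hxm, he⟩ := hsupp (h * b) hne
    refine ⟨s, hs, x, hxm, ?_⟩
    have : h = s * x * b⁻¹ := by rw [← he]; group
    rw [this]; group
  by_cases hnone : ∀ x ∈ XS, ¬ posB L (x * b⁻¹)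
  · -- pr⁺(b•r) = 0
    have h0 : prP o L V0 (b • r) = 0 := by
      refine Subtype.ext (funext fun h => ?_)
      rw [prP_apply]
      show _ = (0 : ↥(Bgr F) → V) h
      rw [Pi.zero_apply]
      split_ifs with hp
      · by_contra hne
        obtain ⟨s, hs, x, hxm, he⟩ := hsmul_supp h hne
        rw [he, posB_mul_left L hs] at hp
        exact hnone x hxm hp
      · rfl
    rw [h0, map_zero]
    exact Submodule.zero_mem _
  · push_neg at hnone
    obtain ⟨x, hxS, hpx⟩ := hnone
    by_cases hall : ∀ x' ∈ XS, posB L (x' * b⁻¹)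
    · -- pr⁺(b•r) = b•r and P(b•r) = 0
      have hfull : prP o L V0 (b • r) = b • r := by
        refine Subtype.ext (funext fun h => ?_)
        rw [prP_apply]
        split_ifs with hp
        · rfl
        · by_contra hne
          have hne' : (b • r : ↥(Ind o (B0Zb F L) V0)).1 h ≠ 0 := fun hc => hne hc.symm
          obtain ⟨s, hs, x', hxm, he⟩ := hsmul_supp h hne'
          rw [he, posB_mul_left L hs] at hp
          exact hp (hall x' hxm)
      rw [hfull, hP.1, hr, smul_zero]
      exact Submodule.zero_mem _
    · push_neg at hall
      obtain ⟨x', hx'S, hnx'⟩ := hall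
      have hbx : b * x⁻¹ ∈ BplusB F L := by
        have := hpx
        unfold posB at this
        rwa [_root_.mul_inv_rev, inv_inv] at this
      obtain ⟨c, hc, n, hbeq⟩ := Bplus_decomp L hbx
      have hnN : n < N := by
        by_contra hge
        push_neg at hge
        apply hnx'
        show (x' * b⁻¹)⁻¹ ∈ BplusB F L
        rw [_root_.mul_inv_rev, inv_inv]
        have hbx' : b * x'⁻¹ = c * ((tB F L) ^ n * (x * x'⁻¹)) := by
          rw [hbeq]; group
        rw [hbx']
        exact BplusB_mul_left L hc (hN x hxS x' hx'S n hge)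
      have hsm : (b • r : ↥(Ind o (B0Zb F L) V0)) = c • (((tB F L) ^ n * x) • r) := by
        refine Subtype.ext (funext fun h => ?_)
        rw [ind_smul_apply, ind_smul_apply, ind_smul_apply, hbeq]
        congr 1
        group
      rw [hsm, prP_equivar o L hc, hP.1]
      exact Submodule.subset_span
        ⟨c, hc, P (prP o L V0 (((tB F L) ^ n * x) • r)), ⟨n, hnN, x, hxS, rfl⟩, rfl⟩

end MainPart

/-- If the kernel of the presentation `ind_{B₀Z}^B (V₀) → V` is finitely
generated over `o[B]`, then `Δ_V(V₀) = <B⁺V₀> ∩ <(B-B⁺)V₀>` is finitely generated over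
`o[B₀Z]`. -/
theorem statement3
    (o : Type) [CommRing o] [IsNoetherianRing o]
    (F : Type) [Field F] [TopologicalSpace F] [IsTopologicalRing F] (LF : NALF F)
    (V : Type) [AddCommGroup V] [Module o V]
    [DistribMulAction (↥(Bgr F)) V] [SMulCommClass (↥(Bgr F)) o V]
    (hsm : IsSmoothRep o (↥(Bgr F)) V)
    (V0 : Submodule o V)
    (hst : IsStableSub o V ((B0Zb F LF : Subgroup ↥(Bgr F)) : Set ↥(Bgr F)) V0)
    (hgen : gspan o V (Set.univ : Set ↥(Bgr F)) (V0 : Set V) = ⊤)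
    (P : Ind o (B0Zb F LF) V0 →ₗ[o] V) (hP : IsPresMap o hst P)
    (hker : IsFGOver o (↥(Ind o (B0Zb F LF) V0)) (Set.univ : Set ↥(Bgr F)) (LinearMap.ker P)) :
    IsFGOver o V ((B0Zb F LF : Subgroup ↥(Bgr F)) : Set ↥(Bgr F))
      (gspan o V (BplusB F LF) (V0 : Set V) ⊓ gspan o V ((BplusB F LF)ᶜ) (V0 : Set V)) := by
  classical
  obtain ⟨Xr, hXrsub, hXreq⟩ := hker
  have hchoose : ∀ r : ↥(Ind o (B0Zb F LF) V0), ∃ X : Finset ↥(Bgr F),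
      ∀ h, (r : ↥(Bgr F) → V) h ≠ 0 → ∃ s ∈ B0Zb F LF, ∃ x ∈ X, h = s * x :=
    fun r => r.2.2.2
  choose suppF hsuppF using hchoose
  set XS : Finset ↥(Bgr F) := Xr.biUnion suppF with hXS
  have hXSsupp : ∀ r ∈ Xr, ∀ h, (r : ↥(Bgr F) → V) h ≠ 0 →
      ∃ s ∈ B0Zb F LF, ∃ x ∈ XS, h = s * x := by
    intro r hr h hne
    obtain ⟨s, hs, x, hxx, he⟩ := hsuppF r h hne
    exact ⟨s, hs, x, Finset.mem_biUnion.mpr ⟨r, hr, hxx⟩, he⟩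
  choose Nf hNf using fun p : ↥(Bgr F) × ↥(Bgr F) => eventually_mem_BplusB LF (p.1 * p.2⁻¹)
  set N : ℕ := (XS ×ˢ XS).sup Nf with hNdef
  have hN : ∀ x ∈ XS, ∀ x' ∈ XS, ∀ n ≥ N, (tB F LF) ^ n * (x * x'⁻¹) ∈ BplusB F LF := by
    intro x hx x' hx' n hn
    exact hNf (x, x') n (le_trans (Finset.le_sup (Finset.mem_product.mpr ⟨hx, hx'⟩)) hn)
  set D : Finset ↥(Bgr F) := (Finset.range N ×ˢ XS).image (fun q => (tB F LF) ^ q.1 * q.2)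
    with hD
  set Xfin : Finset V := (D ×ˢ Xr).image (fun q => P (prP o LF V0 (q.1 • q.2))) with hXfin
  have hker_elt : ∀ r ∈ Xr, P r = 0 := fun r hr => LinearMap.mem_ker.mp (hXrsub hr)
  have hsmul_ker : ∀ (b : ↥(Bgr F)) (r : ↥(Ind o (B0Zb F LF) V0)), P r = 0 → P (b • r) = 0 := by
    intro b r hr; rw [hP.1, hr, smul_zero]
  have hdelta := delta_eq o LF hst hP
  have hXfin_sub : (Xfin : Set V) ⊆
      ((gspan o V (BplusB F LF) (V0 : Set V) ⊓ gspan o V ((BplusB F LF)ᶜ) (V0 : Set V) :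
        Submodule o V) : Set V) := by
    intro v hv
    obtain ⟨q, hq, rfl⟩ := Finset.mem_image.mp (Finset.mem_coe.mp hv)
    obtain ⟨hqD, hqXr⟩ := Finset.mem_product.mp hq
    rw [SetLike.mem_coe, hdelta]
    exact Submodule.mem_map.mpr ⟨q.1 • q.2,
      LinearMap.mem_ker.mpr (hsmul_ker q.1 q.2 (hker_elt q.2 hqXr)), rfl⟩
  refine ⟨Xfin, hXfin_sub, ?_⟩
  apply le_antisymm
  · rw [hdelta, hXreq]
    show Submodule.map (P ∘ₗ prP o LF V0) (Submodule.span o _) ≤ _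
    rw [Submodule.map_span]
    apply Submodule.span_le.mpr
    rintro v ⟨z, ⟨b, -, r, hrX, rfl⟩, rfl⟩
    have hrXr : r ∈ Xr := Finset.mem_coe.mp hrX
    have hres := case_analysis o LF hst hP (hker_elt r hrXr) XS (hXSsupp r hrXr) N hN b
    rw [SetLike.mem_coe, LinearMap.comp_apply]
    refine gspan_mono_right o V _ ?_ hres
    rintro w ⟨n, hn, x, hxS, rfl⟩
    apply Finset.mem_coe.mpr
    rw [hXfin]
    exact Finset.mem_image.mpr ⟨((tB F LF) ^ n * x, r),
      Finset.mem_product.mpr ⟨Finset.mem_image.mpr ⟨(n, x),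
        Finset.mem_product.mpr ⟨Finset.mem_range.mpr hn, hxS⟩, rfl⟩, hrXr⟩, rfl⟩
  · apply Submodule.span_le.mpr
    rintro v ⟨c, hc, w, hw, rfl⟩
    have hwd := Submodule.mem_inf.mp (SetLike.mem_coe.mp (hXfin_sub hw))
    rw [SetLike.mem_coe, Submodule.mem_inf]
    constructor
    · exact gspan_smul_mem o (fun s hs => BplusB_mul_left LF hc hs) w hwd.1
    · refine gspan_smul_mem o (fun s hs => ?_) w hwd.2
      simp only [Set.mem_compl_iff] at hs ⊢
      intro hcs
      exact hs ((BplusB_mul_left_iff LF hc s).mp hcs)
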